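/- Let H₁, H₂ be Hilbert spaces, R_ε bounded self-adjoint nonnegative compact operators on H₁ with eigenvalues ν_1^ε ≥ ν_2^ε ≥ ⋯ > 0, R a self-adjoint nonnegative compact operator on H₂ with eigenvalues ν_1 ≥ ν_2 ≥ ⋯ > 0, and U_ε : H₂ → H₁ with ‖U_ε g‖ → ‖g‖ for all g. Suppose ‖R_ε U_ε − U_ε R‖_{op} → 0 and hypothesis (H4) holds (discrete compactness of R_ε). Then for every fixed k, ν_k^ε → ν_k as ε → 0. -/

import Mathlib

open MeasureTheory Filter Topology Set
open scoped RealInnerProductSpace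
set_option linter.unusedSectionVars false

section Spectral
variable {H : Type*} [NormedAddCommGroup H] [InnerProductSpace ℝ H] [CompleteSpace H]

variable (e : ℕ → H)

lemma tot_tsum (hon : Orthonormal ℝ e)
    (htot : (Submodule.span ℝ (Set.range e)).topologicalClosure = ⊤) (x y : H) :
    ∑' i, ⟪x, e i⟫ * ⟪e i, y⟫ = ⟪x, y⟫ := by
  have h := (HilbertBasis.mk hon (le_of_eq htot.symm)).tsum_inner_mul_inner x y
  rwa [HilbertBasis.coe_mk] at h

lemma tot_summable (hon : Orthonormal ℝ e)
    (htot : (Submodule.span ℝ (Set.range e)).topologicalClosure = ⊤) (x y : H) :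
    Summable fun i => ⟪x, e i⟫ * ⟪e i, y⟫ := by
  have h := (HilbertBasis.mk hon (le_of_eq htot.symm)).summable_inner_mul_inner x y
  rwa [HilbertBasis.coe_mk] at h

lemma tot_eq_zero (hon : Orthonormal ℝ e)
    (htot : (Submodule.span ℝ (Set.range e)).topologicalClosure = ⊤) (x : H)
    (hx : ∀ i, ⟪x, e i⟫ = 0) : x = 0 := by
  have : ‖x‖ ^ 2 = 0 := by
    rw [← real_inner_self_eq_norm_sq, ← tot_tsum e hon htot x x]
    simp [hx]
  simpa using pow_eq_zero_iff (n := 2) (by norm_num) |>.mp this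

variable (T : H →L[ℝ] H) (μ : ℕ → ℝ)

lemma spec_coeff (hsa : IsSelfAdjoint T) (heig : ∀ i, T (e i) = μ i • e i) (i : ℕ) (x : H) :
    ⟪e i, T x⟫ = μ i * ⟪e i, x⟫ := by
  have h : ⟪T (e i), x⟫ = ⟪e i, T x⟫ := hsa.isSymmetric (e i) x
  rw [← h, heig, real_inner_smul_left]

lemma spec_coeff' (hsa : IsSelfAdjoint T) (heig : ∀ i, T (e i) = μ i • e i) (i : ℕ) (x : H) :
    ⟪T x, e i⟫ = μ i * ⟪e i, x⟫ := by
  rw [real_inner_comm]; exact spec_coeff e T μ hsa heig i x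

variable (hsa : IsSelfAdjoint T) (hon : Orthonormal ℝ e)
  (heig : ∀ i, T (e i) = μ i • e i)
  (htot : (Submodule.span ℝ (Set.range e)).topologicalClosure = ⊤)
  (hanti : Antitone μ) (hpos : ∀ i, 0 < μ i)

include hsa hon heig htot hanti hpos

lemma spec_norm_le (x : H) : ‖T x‖ ≤ μ 0 * ‖x‖ := by
  have hc1 : ∀ i, ⟪T x, e i⟫ * ⟪e i, T x⟫ = (μ i * ⟪e i, x⟫) ^ 2 := by
    intro i
    rw [spec_coeff' e T μ hsa heig, spec_coeff e T μ hsa heig]; ring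
  have hc2 : ∀ i, ⟪x, e i⟫ * ⟪e i, x⟫ = ⟪e i, x⟫ ^ 2 := by
    intro i; rw [real_inner_comm x (e i)]; ring
  have h1 : ‖T x‖ ^ 2 = ∑' i, (μ i * ⟪e i, x⟫) ^ 2 := by
    have h := tot_tsum e hon htot (T x) (T x)
    rw [real_inner_self_eq_norm_sq] at h
    simp_rw [hc1] at h
    exact h.symm
  have h2 : ‖x‖ ^ 2 = ∑' i, ⟪e i, x⟫ ^ 2 := by
    have h := tot_tsum e hon htot x x
    rw [real_inner_self_eq_norm_sq] at h
    simp_rw [hc2] at h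
    exact h.symm
  have hs2 : Summable fun i => ⟪e i, x⟫ ^ 2 := by
    have h := tot_summable e hon htot x x
    simpa only [hc2] using h
  have hs1 : Summable fun i => (μ i * ⟪e i, x⟫) ^ 2 := by
    have h := tot_summable e hon htot (T x) (T x)
    simpa only [hc1] using h
  have key : ‖T x‖ ^ 2 ≤ (μ 0) ^ 2 * ‖x‖ ^ 2 := by
    rw [h1, h2, ← tsum_mul_left]
    refine Summable.tsum_le_tsum (fun i => ?_) hs1 (hs2.mul_left _)
    have h0 : (μ i)^2 ≤ (μ 0)^2 := by
      have := hanti (Nat.zero_le i)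
      nlinarith [(hpos i).le]
    nlinarith [sq_nonneg (⟪e i, x⟫)]
  have h0 : 0 ≤ μ 0 * ‖x‖ := mul_nonneg (hpos 0).le (norm_nonneg x)
  nlinarith [norm_nonneg (T x)]

lemma spec_rayleigh_le (k : ℕ) (x : H) (hx : ∀ j < k, ⟪e j, x⟫ = 0) :
    ⟪T x, x⟫ ≤ μ k * ‖x‖ ^ 2 := by
  have hc1 : ∀ i, ⟪T x, e i⟫ * ⟪e i, x⟫ = μ i * ⟪e i, x⟫ ^ 2 := by
    intro i; rw [spec_coeff' e T μ hsa heig]; ring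
  have hc2 : ∀ i, ⟪x, e i⟫ * ⟪e i, x⟫ = ⟪e i, x⟫ ^ 2 := by
    intro i; rw [real_inner_comm x (e i)]; ring
  have h1 : ⟪T x, x⟫ = ∑' i, μ i * ⟪e i, x⟫ ^ 2 := by
    have h := tot_tsum e hon htot (T x) x
    simp_rw [hc1] at h
    exact h.symm
  have h2 : ‖x‖ ^ 2 = ∑' i, ⟪e i, x⟫ ^ 2 := by
    have h := tot_tsum e hon htot x x
    rw [real_inner_self_eq_norm_sq] at h
    simp_rw [hc2] at h
    exact h.symm
  have hs2 : Summable fun i => ⟪e i, x⟫ ^ 2 := by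
    have h := tot_summable e hon htot x x
    simpa only [hc2] using h
  have hs1 : Summable fun i => μ i * ⟪e i, x⟫ ^ 2 := by
    have h := tot_summable e hon htot (T x) x
    simpa only [hc1] using h
  rw [h1, h2, ← tsum_mul_left]
  refine Summable.tsum_le_tsum (fun i => ?_) hs1 (hs2.mul_left _)
  rcases lt_or_ge i k with hik | hik
  · rw [hx i hik]; simp
  · have := hanti hik
    nlinarith [sq_nonneg (⟪e i, x⟫)]

lemma spec_CF (k : ℕ) (w : Fin (k+1) → H) (hw : LinearIndependent ℝ w) (c : ℝ)
    (hc : ∀ x ∈ Submodule.span ℝ (Set.range w), c * ‖x‖ ^ 2 ≤ ⟪T x, x⟫) : c ≤ μ k := by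
  classical
  let φ : (Fin (k+1) → ℝ) →ₗ[ℝ] (Fin k → ℝ) :=
    { toFun := fun a j => ⟪e j, ∑ i, a i • w i⟫
      map_add' := by
        intro a b; ext j
        simp [add_smul, Finset.sum_add_distrib, inner_add_right]
      map_smul' := by
        intro t a; ext j
        simp only [smul_eq_mul, Pi.smul_apply, mul_smul, ← Finset.smul_sum,
          real_inner_smul_right, RingHom.id_apply] }
  have hker : ∃ a : Fin (k+1) → ℝ, a ≠ 0 ∧ φ a = 0 := by
    by_contra hcon
    push_neg at hcon
    have hinj : Function.Injective φ := by
      rw [← LinearMap.ker_eq_bot, Submodule.eq_bot_iff]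
      intro a ha
      by_contra h0
      exact (hcon a h0) ha
    have := LinearMap.finrank_le_finrank_of_injective hinj
    simp [Module.finrank_pi] at this
  obtain ⟨a, ha0, haφ⟩ := hker
  set x := ∑ i, a i • w i with hxdef
  have hxne : x ≠ 0 := by
    intro hx0
    apply ha0
    have := linearIndependent_iff'.mp hw Finset.univ a (by simpa [hxdef] using hx0)
    ext i; exact this i (Finset.mem_univ i)
  have hxmem : x ∈ Submodule.span ℝ (Set.range w) :=
    Submodule.sum_mem _ (fun i _ => Submodule.smul_mem _ _ (Submodule.subset_span ⟨i, rfl⟩))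
  have hxperp : ∀ j < k, ⟪e j, x⟫ = 0 := by
    intro j hj
    have := congrFun haφ ⟨j, hj⟩
    simpa [φ, hxdef] using this
  have h1 := hc x hxmem
  have h2 := spec_rayleigh_le e T μ hsa hon heig htot hanti hpos k x hxperp
  have hxn : 0 < ‖x‖ ^ 2 := pow_pos (norm_pos_iff.mpr hxne) 2
  nlinarith

end Spectral

lemma double_inner {H : Type*} [NormedAddCommGroup H] [InnerProductSpace ℝ H]
    (m : ℕ) (a : Fin m → ℝ) (v w : Fin m → H) :
    ⟪∑ i, a i • v i, ∑ j, a j • w j⟫ = ∑ i, ∑ j, a i * (a j * ⟪v i, w j⟫) := by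
  rw [sum_inner]
  refine Finset.sum_congr rfl fun i _ => ?_
  rw [real_inner_smul_left, inner_sum, Finset.mul_sum]
  refine Finset.sum_congr rfl fun j _ => ?_
  rw [real_inner_smul_right]

lemma double_est (m : ℕ) (a : Fin m → ℝ) (r : Fin m → Fin m → ℝ) (E : ℝ)
    (hE : ∀ i j, |r i j| ≤ E) :
    |∑ i, ∑ j, a i * (a j * r i j)| ≤ E * (m * ∑ i, a i ^ 2) := by
  rcases Nat.eq_zero_or_pos m with hm | hm
  · subst hm; simp
  have key : |∑ i, ∑ j, a i * (a j * r i j)| ≤ ∑ i, ∑ j, E * ((a i ^ 2 + a j ^ 2) / 2) := by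
    refine (Finset.abs_sum_le_sum_abs _ _).trans (Finset.sum_le_sum fun i _ => ?_)
    refine (Finset.abs_sum_le_sum_abs _ _).trans (Finset.sum_le_sum fun j _ => ?_)
    have h1 := hE i j
    have h2 := abs_nonneg (r i j)
    have h3 : |a i * (a j * r i j)| = |a i| * |a j| * |r i j| := by
      rw [abs_mul, abs_mul]; ring
    nlinarith [sq_nonneg (|a i| - |a j|), sq_abs (a i), sq_abs (a j), abs_nonneg (a i),
      abs_nonneg (a j), mul_nonneg (abs_nonneg (a i)) (abs_nonneg (a j))]
  refine key.trans (le_of_eq ?_)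
  have hrow : ∀ i : Fin m, ∑ j, E * ((a i ^ 2 + a j ^ 2) / 2)
      = E * ((m * a i ^ 2 + ∑ j, a j ^ 2) / 2) := by
    intro i
    rw [← Finset.mul_sum]
    congr 1
    rw [← Finset.sum_div]
    congr 1
    rw [Finset.sum_add_distrib, Finset.sum_const, Finset.card_univ, Fintype.card_fin,
      nsmul_eq_mul]
  rw [Finset.sum_congr rfl fun i _ => hrow i, ← Finset.mul_sum]
  congr 1
  rw [← Finset.sum_div, Finset.sum_add_distrib, ← Finset.mul_sum, Finset.sum_const,
    Finset.card_univ, Fintype.card_fin, nsmul_eq_mul]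
  ring

lemma subseq_claim {H₁ H₂ : Type*}
    [NormedAddCommGroup H₁] [InnerProductSpace ℝ H₁] [CompleteSpace H₁]
    [NormedAddCommGroup H₂] [InnerProductSpace ℝ H₂] [CompleteSpace H₂]
    (Rε : ℝ → (H₁ →L[ℝ] H₁)) (νε : ℝ → ℕ → ℝ) (eε : ℝ → ℕ → H₁)
    (hνε_pos : ∀ ε : ℝ, 0 < ε → ∀ k, 0 < νε ε k)
    (heε : ∀ ε : ℝ, 0 < ε → (∀ i, ‖eε ε i‖ = 1) ∧ (∀ k, Rε ε (eε ε k) = νε ε k • eε ε k))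
    (Uε : ℝ → (H₂ →L[ℝ] H₁))
    (hU : ∀ g : H₂, Tendsto (fun ε : ℝ => ‖Uε ε g‖) (𝓝[>] 0) (𝓝 ‖g‖))
    (h4 : ∀ εn : ℕ → ℝ, (∀ n, 0 < εn n) → Tendsto εn atTop (𝓝 0) →
      ∀ f : ℕ → H₁, (∃ M : ℝ, ∀ n, ‖f n‖ ≤ M) →
      ∃ φ : ℕ → ℕ, StrictMono φ ∧ ∃ g : H₂,
        Tendsto (fun n => ‖Rε (εn (φ n)) (f (φ n)) - Uε (εn (φ n)) g‖) atTop (𝓝 0))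
    (m : ℕ) :
    ∀ εn : ℕ → ℝ, (∀ n, 0 < εn n) → Tendsto εn atTop (𝓝 0) →
      ∃ φ : ℕ → ℕ, StrictMono φ ∧ ∃ g : Fin m → H₂, ∃ μl : Fin m → ℝ,
        ∀ j : Fin m,
          Tendsto (fun n => ‖Rε (εn (φ n)) (eε (εn (φ n)) j) - Uε (εn (φ n)) (g j)‖)
            atTop (𝓝 0) ∧
          Tendsto (fun n => νε (εn (φ n)) (j : ℕ)) atTop (𝓝 (μl j)) := by
  induction m with
  | zero =>
    intro εn hpos htend
    exact ⟨id, strictMono_id, Fin.elim0, Fin.elim0, fun j => j.elim0⟩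
  | succ m ih =>
    intro εn hpos htend
    obtain ⟨φ₁, hφ₁, g₁, μ₁, hIH⟩ := ih εn hpos htend
    set ε' : ℕ → ℝ := fun n => εn (φ₁ n) with hε'def
    have hε'pos : ∀ n, 0 < ε' n := fun n => hpos _
    have hε'tend : Tendsto ε' atTop (𝓝 0) := htend.comp hφ₁.tendsto_atTop
    obtain ⟨φ₂, hφ₂, g, hg⟩ := h4 ε' hε'pos hε'tend (fun n => eε (ε' n) m)
      ⟨1, fun n => le_of_eq ((heε _ (hε'pos n)).1 m)⟩
    -- the eigenvalue sequence
    set a : ℕ → ℝ := fun n => νε (ε' (φ₂ n)) m with hadef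
    have ha_eq : ∀ n, a n = ‖Rε (ε' (φ₂ n)) (eε (ε' (φ₂ n)) m)‖ := by
      intro n
      rw [(heε _ (hε'pos (φ₂ n))).2 m, norm_smul, (heε _ (hε'pos (φ₂ n))).1 m]
      rw [Real.norm_eq_abs, abs_of_pos (hνε_pos _ (hε'pos (φ₂ n)) m), mul_one]
    have hUtend : Tendsto (fun n => ε' (φ₂ n)) atTop (𝓝[>] 0) :=
      tendsto_nhdsWithin_of_tendsto_nhds_of_eventually_within _
        (hε'tend.comp hφ₂.tendsto_atTop)
        (Eventually.of_forall fun n => hε'pos (φ₂ n))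
    have hb : Tendsto (fun n => ‖Rε (ε' (φ₂ n)) (eε (ε' (φ₂ n)) m) - Uε (ε' (φ₂ n)) g‖
        + ‖Uε (ε' (φ₂ n)) g‖) atTop (𝓝 (0 + ‖g‖)) :=
      hg.add ((hU g).comp hUtend)
    obtain ⟨M, hM⟩ := hb.bddAbove_range
    have haM : ∀ n, a n ∈ Icc (0:ℝ) M := by
      intro n
      constructor
      · exact (hνε_pos _ (hε'pos (φ₂ n)) m).le
      · calc a n ≤ ‖Rε (ε' (φ₂ n)) (eε (ε' (φ₂ n)) m) - Uε (ε' (φ₂ n)) g‖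
            + ‖Uε (ε' (φ₂ n)) g‖ := by
              rw [ha_eq]
              exact (norm_le_norm_add_norm_sub' _ _).trans (by rw [add_comm])
          _ ≤ M := hM ⟨n, rfl⟩
    obtain ⟨μm, -, φ₃, hφ₃, hμm⟩ := tendsto_subseq_of_bounded (Metric.isBounded_Icc 0 M) haM
    refine ⟨φ₁ ∘ φ₂ ∘ φ₃, hφ₁.comp (hφ₂.comp hφ₃), Fin.snoc g₁ g, Fin.snoc μ₁ μm, ?_⟩
    intro j
    refine Fin.lastCases ?_ ?_ j
    · simp only [Fin.snoc_last, Fin.val_last]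
      exact ⟨(hg.comp hφ₃.tendsto_atTop), hμm⟩
    · intro i
      simp only [Fin.snoc_castSucc, Fin.coe_castSucc]
      exact ⟨(hIH i).1.comp ((hφ₂.comp hφ₃).tendsto_atTop),
        (hIH i).2.comp ((hφ₂.comp hφ₃).tendsto_atTop)⟩

section
variable {H₁ H₂ : Type*}
    [NormedAddCommGroup H₁] [InnerProductSpace ℝ H₁] [CompleteSpace H₁]
    [NormedAddCommGroup H₂] [InnerProductSpace ℝ H₂] [CompleteSpace H₂]

lemma hUinner_aux (Uε : ℝ → (H₂ →L[ℝ] H₁))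
    (hU : ∀ g : H₂, Tendsto (fun ε : ℝ => ‖Uε ε g‖) (𝓝[>] 0) (𝓝 ‖g‖)) (g h : H₂) :
    Tendsto (fun ε : ℝ => ⟪Uε ε g, Uε ε h⟫) (𝓝[>] 0) (𝓝 ⟪g, h⟫) := by
  have key : ∀ ε : ℝ, ⟪Uε ε g, Uε ε h⟫
      = (‖Uε ε (g + h)‖ * ‖Uε ε (g + h)‖ - ‖Uε ε g‖ * ‖Uε ε g‖
        - ‖Uε ε h‖ * ‖Uε ε h‖) / 2 := by
    intro ε
    rw [map_add, real_inner_eq_norm_add_mul_self_sub_norm_mul_self_sub_norm_mul_self_div_two]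
  simp_rw [key, real_inner_eq_norm_add_mul_self_sub_norm_mul_self_sub_norm_mul_self_div_two g h]
  exact ((((hU (g+h)).mul (hU (g+h))).sub ((hU g).mul (hU g))).sub
    ((hU h).mul (hU h))).div_const 2
end

section Dir1
variable {H₁ H₂ : Type*}
    [NormedAddCommGroup H₁] [InnerProductSpace ℝ H₁] [CompleteSpace H₁]
    [NormedAddCommGroup H₂] [InnerProductSpace ℝ H₂] [CompleteSpace H₂]

set_option maxHeartbeats 3200000 in
lemma dir1 (Rε : ℝ → (H₁ →L[ℝ] H₁)) (R : H₂ →L[ℝ] H₂)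
    (hRεsa : ∀ ε : ℝ, 0 < ε → IsSelfAdjoint (Rε ε))
    (νε : ℝ → ℕ → ℝ) (ν : ℕ → ℝ) (eε : ℝ → ℕ → H₁) (e : ℕ → H₂)
    (hνε_pos : ∀ ε : ℝ, 0 < ε → ∀ k, 0 < νε ε k)
    (hνε_anti : ∀ ε : ℝ, 0 < ε → Antitone (νε ε))
    (heε : ∀ ε : ℝ, 0 < ε → Orthonormal ℝ (eε ε) ∧
      (∀ k, Rε ε (eε ε k) = νε ε k • eε ε k) ∧
      (Submodule.span ℝ (Set.range (eε ε))).topologicalClosure = ⊤)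
    (hν_pos : ∀ k, 0 < ν k) (hν_anti : Antitone ν)
    (he : Orthonormal ℝ e ∧ (∀ k, R (e k) = ν k • e k) ∧
      (Submodule.span ℝ (Set.range e)).topologicalClosure = ⊤)
    (Uε : ℝ → (H₂ →L[ℝ] H₁))
    (hU : ∀ g : H₂, Tendsto (fun ε : ℝ => ‖Uε ε g‖) (𝓝[>] 0) (𝓝 ‖g‖))
    (hnorm : Tendsto (fun ε : ℝ => ‖(Rε ε).comp (Uε ε) - (Uε ε).comp R‖) (𝓝[>] 0) (𝓝 0))
    (k : ℕ) (η : ℝ) (hη : 0 < η) :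
    ∀ᶠ ε in 𝓝[>] (0:ℝ), ν k - η < νε ε k := by
  classical
  obtain ⟨c, hcdef⟩ : ∃ c : ℝ, c = ν k - η/2 := ⟨_, rfl⟩
  have hck : ν k - η < c := by rw [hcdef]; linarith
  rcases le_or_gt c 0 with hc0 | hc0
  · filter_upwards [self_mem_nhdsWithin] with ε hε
    simp only [mem_Ioi] at hε
    have := hνε_pos ε hε k
    linarith
  obtain ⟨C₁, hC₁def⟩ : ∃ C : ℝ, C = (k+1) * (2 + ν 0) := ⟨_, rfl⟩
  have hC₁pos : 0 < C₁ := by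
    rw [hC₁def]; have := hν_pos 0; positivity
  obtain ⟨δ, hδpos, hδa, hδb⟩ : ∃ δ : ℝ, 0 < δ ∧ δ * (C₁ + c * (k+1)) ≤ η/2
      ∧ δ * (k+1) ≤ 1/2 := by
    refine ⟨min (η / (2 * (C₁ + c * (k+1) + 1))) (1 / (2*(k+1))), ?_, ?_, ?_⟩
    · apply lt_min <;> positivity
    · have h1 : min (η / (2 * (C₁ + c * (k+1) + 1))) (1 / (2*(k+1)))
          ≤ η / (2 * (C₁ + c * (k+1) + 1)) := min_le_left _ _
      calc min (η / (2 * (C₁ + c * (k+1) + 1))) (1 / (2*(k+1))) * (C₁ + c * (k+1))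
          ≤ (η / (2 * (C₁ + c * (k+1) + 1))) * (C₁ + c * (k+1)) := by
            apply mul_le_mul_of_nonneg_right h1
            positivity
        _ ≤ η / 2 := by
            rw [div_mul_eq_mul_div, div_le_div_iff₀ (by positivity) (by norm_num)]
            nlinarith
    · have h1 : min (η / (2 * (C₁ + c * (k+1) + 1))) (1 / (2*(k+1)))
          ≤ 1 / (2*(k+1)) := min_le_right _ _
      calc min (η / (2 * (C₁ + c * (k+1) + 1))) (1 / (2*(k+1))) * (k+1)
          ≤ (1 / (2*(k+1))) * (k+1) := by
            apply mul_le_mul_of_nonneg_right h1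
            positivity
        _ ≤ 1/2 := by
            rw [div_mul_eq_mul_div, one_mul, div_le_div_iff₀ (by positivity) (by norm_num)]
            nlinarith [Nat.cast_nonneg (α := ℝ) k]
  -- eventual facts
  have hev1 : ∀ᶠ ε in 𝓝[>] (0:ℝ), ∀ i : Fin (k+1), ∀ j : Fin (k+1),
      |⟪Uε ε (e i), Uε ε (e j)⟫ - (if (i:ℕ) = (j:ℕ) then 1 else 0)| ≤ δ := by
    rw [eventually_all]; intro i
    rw [eventually_all]; intro j
    have hlim := hUinner_aux Uε hU (e i) (e j)
    have hval : ⟪e (i:ℕ), e (j:ℕ)⟫ = if (i:ℕ) = (j:ℕ) then 1 else 0 :=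
      orthonormal_iff_ite.mp he.1 (i:ℕ) (j:ℕ)
    rw [hval] at hlim
    have := Metric.tendsto_nhds.mp hlim δ hδpos
    filter_upwards [this] with ε hε
    rw [Real.dist_eq] at hε; exact hε.le
  have hev2 : ∀ᶠ ε in 𝓝[>] (0:ℝ), ‖(Rε ε).comp (Uε ε) - (Uε ε).comp R‖ ≤ δ := by
    filter_upwards [hnorm.eventually_lt_const hδpos] with ε hε using hε.le
  have hev3 : ∀ᶠ ε in 𝓝[>] (0:ℝ), ∀ i : Fin (k+1), ‖Uε ε (e i)‖ ≤ 2 := by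
    rw [eventually_all]; intro i
    have h1 : ‖e (i:ℕ)‖ < 2 := by rw [he.1.1 (i:ℕ)]; norm_num
    exact (hU (e i)).eventually_le_const h1
  filter_upwards [hev1, hev2, hev3, self_mem_nhdsWithin] with ε hG hD hB hε
  simp only [mem_Ioi] at hε
  obtain ⟨honε, heigε, htotε⟩ := heε ε hε
  set w : Fin (k+1) → H₁ := fun i => Uε ε (e i) with hwdef
  -- entries of the Gram-type matrices
  have hq : ∀ i j : Fin (k+1),
      |⟪Rε ε (w i), w j⟫ - (if (i:ℕ)=(j:ℕ) then ν i else 0)| ≤ (2 + ν 0) * δ := by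
    intro i j
    have hsplit : Rε ε (w i) = ((Rε ε).comp (Uε ε) - (Uε ε).comp R) (e i) + Uε ε (R (e i)) := by
      simp only [ContinuousLinearMap.sub_apply, ContinuousLinearMap.comp_apply]
      abel
    rw [hsplit, inner_add_left]
    have h2 : ⟪Uε ε (R (e (i:ℕ))), w j⟫ = ν i * ⟪Uε ε (e i), Uε ε (e j)⟫ := by
      rw [he.2.1 (i:ℕ), _root_.map_smul]
      exact real_inner_smul_left _ _ _
    rw [h2]
    have hterm1 : |⟪((Rε ε).comp (Uε ε) - (Uε ε).comp R) (e (i:ℕ)), w j⟫| ≤ 2*δ := by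
      refine (abs_real_inner_le_norm _ _).trans ?_
      have h3 := ContinuousLinearMap.le_opNorm ((Rε ε).comp (Uε ε) - (Uε ε).comp R) (e (i:ℕ))
      rw [he.1.1 (i:ℕ), mul_one] at h3
      have h4 := hB j
      have h5 := norm_nonneg (((Rε ε).comp (Uε ε) - (Uε ε).comp R) (e (i:ℕ)))
      nlinarith [norm_nonneg (w j)]
    have hterm2 : |ν i * ⟪Uε ε (e i), Uε ε (e j)⟫ - (if (i:ℕ)=(j:ℕ) then ν (i:ℕ) else 0)|
        ≤ ν 0 * δ := by
      rw [show (if (i:ℕ)=(j:ℕ) then ν (i:ℕ) else 0)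
          = ν (i:ℕ) * (if (i:ℕ)=(j:ℕ) then 1 else 0) from by split_ifs <;> ring,
        ← mul_sub, abs_mul]
      have hν : |ν (i:ℕ)| ≤ ν 0 := by
        rw [abs_of_pos (hν_pos _)]
        exact hν_anti (Nat.zero_le _)
      exact mul_le_mul hν (hG i j) (abs_nonneg _) (hν_pos 0).le
    calc |⟪((Rε ε).comp (Uε ε) - (Uε ε).comp R) (e (i:ℕ)), w j⟫
          + ν i * ⟪Uε ε (e i), Uε ε (e j)⟫ - (if (i:ℕ)=(j:ℕ) then ν (i:ℕ) else 0)|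
        ≤ |⟪((Rε ε).comp (Uε ε) - (Uε ε).comp R) (e (i:ℕ)), w j⟫|
          + |ν i * ⟪Uε ε (e i), Uε ε (e j)⟫ - (if (i:ℕ)=(j:ℕ) then ν (i:ℕ) else 0)| := by
          rw [add_sub_assoc]; exact abs_add_le _ _
      _ ≤ 2*δ + ν 0 * δ := add_le_add hterm1 hterm2
      _ = (2 + ν 0) * δ := by ring
  -- diagonal sums
  have hdiag : ∀ (a : Fin (k+1) → ℝ) (b : ℕ → ℝ),
      ∑ i, ∑ j, a i * (a j * (if (i:ℕ)=(j:ℕ) then b (i:ℕ) else 0)) = ∑ i, a i^2 * b (i:ℕ) := by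
    intro a b
    refine Finset.sum_congr rfl fun i _ => ?_
    have : ∀ j : Fin (k+1), a i * (a j * (if (i:ℕ)=(j:ℕ) then b (i:ℕ) else 0))
        = if i = j then a i * (a j * b (i:ℕ)) else 0 := by
      intro j
      rcases eq_or_ne i j with h | h
      · subst h; simp
      · rw [if_neg h, if_neg (fun hv => h (Fin.val_injective hv)), mul_zero, mul_zero]
    rw [Finset.sum_congr rfl fun j _ => this j, Finset.sum_ite_eq Finset.univ i
      (fun j => a i * (a j * b (i:ℕ)))]
    simp [sq]; ring
  -- key estimates for x in span w
  have hx_est : ∀ a : Fin (k+1) → ℝ,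
      (1 - δ*(k+1)) * (∑ i, a i^2) ≤ ‖(∑ i, a i • w i : H₁)‖^2 ∧
      ‖(∑ i, a i • w i : H₁)‖^2 ≤ (1 + δ*(k+1)) * (∑ i, a i^2) ∧
      ν k * (∑ i, a i^2) - C₁ * δ * (∑ i, a i^2) ≤ ⟪Rε ε (∑ i, a i • w i), (∑ i, a i • w i : H₁)⟫ := by
    intro a
    obtain ⟨S, hSdef⟩ : ∃ S : ℝ, ∑ i, a i^2 = S := ⟨_, rfl⟩
    rw [hSdef]
    have hSnn : 0 ≤ S := hSdef ▸ Finset.sum_nonneg fun i _ => sq_nonneg _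
    -- Gram part
    have hGram : |‖(∑ i, a i • w i : H₁)‖^2 - S| ≤ δ * ((k+1) * S) := by
      have hid : ‖(∑ i, a i • w i : H₁)‖^2 = ∑ i, ∑ j, a i * (a j * ⟪w i, w j⟫) := by
        rw [← real_inner_self_eq_norm_sq, double_inner]
      have hdecomp : ∀ i j : Fin (k+1), ⟪w i, w j⟫
          = (if (i:ℕ)=(j:ℕ) then (1:ℝ) else 0) + (⟪w i, w j⟫ - (if (i:ℕ)=(j:ℕ) then 1 else 0)) :=
        fun i j => by ring
      have expand : ‖(∑ i, a i • w i : H₁)‖^2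
          = S + ∑ i, ∑ j, a i * (a j * (⟪w i, w j⟫ - (if (i:ℕ)=(j:ℕ) then 1 else 0))) := by
        rw [hid]
        have : ∀ i j : Fin (k+1), a i * (a j * ⟪w i, w j⟫)
            = a i * (a j * (if (i:ℕ)=(j:ℕ) then (1:ℝ) else 0))
              + a i * (a j * (⟪w i, w j⟫ - (if (i:ℕ)=(j:ℕ) then 1 else 0))) := by
          intro i j; ring
        simp_rw [this, Finset.sum_add_distrib]
        congr 1
        have := hdiag a (fun _ => (1:ℝ))
        simp only [mul_one] at this
        rw [this]
        exact hSdef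
      rw [expand, add_sub_cancel_left]
      have h2 := double_est (k+1) a
        (fun i j => ⟪w i, w j⟫ - (if (i:ℕ)=(j:ℕ) then 1 else 0)) δ (fun i j => hG i j)
      rw [hSdef] at h2
      exact h2.trans_eq (by push_cast; ring)
    constructor
    · have := abs_le.mp hGram
      nlinarith
    constructor
    · have := abs_le.mp hGram
      nlinarith
    -- Rayleigh part
    · have hid : ⟪Rε ε (∑ i, a i • w i), (∑ i, a i • w i : H₁)⟫
          = ∑ i, ∑ j, a i * (a j * ⟪Rε ε (w i), w j⟫) := by
        rw [map_sum]
        have : ∀ i : Fin (k+1), Rε ε (a i • w i) = a i • Rε ε (w i) := fun i => map_smul _ _ _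
        rw [Finset.sum_congr rfl fun i _ => this i]
        exact double_inner (k+1) a (fun i => Rε ε (w i)) w
      have expand : ⟪Rε ε (∑ i, a i • w i), (∑ i, a i • w i : H₁)⟫
          = (∑ i, a i^2 * ν (i:ℕ))
            + ∑ i, ∑ j, a i * (a j * (⟪Rε ε (w i), w j⟫ - (if (i:ℕ)=(j:ℕ) then ν (i:ℕ) else 0))) := by
        rw [hid]
        have : ∀ i j : Fin (k+1), a i * (a j * ⟪Rε ε (w i), w j⟫)
            = a i * (a j * (if (i:ℕ)=(j:ℕ) then ν (i:ℕ) else 0))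
              + a i * (a j * (⟪Rε ε (w i), w j⟫ - (if (i:ℕ)=(j:ℕ) then ν (i:ℕ) else 0))) := by
          intro i j; ring
        simp_rw [this, Finset.sum_add_distrib]
        congr 1
        exact hdiag a ν
      rw [expand]
      have hres := double_est (k+1) a
        (fun i j => ⟪Rε ε (w i), w j⟫ - (if (i:ℕ)=(j:ℕ) then ν (i:ℕ) else 0))
        ((2 + ν 0) * δ) (fun i j => hq i j)
      rw [hSdef] at hres
      have hmain : ν k * S ≤ ∑ i, a i^2 * ν (i:ℕ) := by
        rw [← hSdef, Finset.mul_sum]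
        refine Finset.sum_le_sum fun i _ => ?_
        have hik : (i:ℕ) ≤ k := Fin.is_le i
        calc ν k * a i ^ 2 = a i ^ 2 * ν k := mul_comm _ _
          _ ≤ a i ^ 2 * ν (i:ℕ) := mul_le_mul_of_nonneg_left (hν_anti hik) (sq_nonneg _)
      have habs := (abs_le.mp hres).1
      have hC : (2 + ν 0) * δ * (((k:ℕ)+1 : ℕ) * S) = C₁ * δ * S := by
        rw [hC₁def]; push_cast; ring
      linarith [habs, hmain, hC]
  -- linear independence
  have hw_li : LinearIndependent ℝ w := by
    rw [Fintype.linearIndependent_iff]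
    intro a ha
    have h1 := (hx_est a).1
    rw [ha] at h1
    simp only [norm_zero] at h1
    have hS : ∑ i, a i^2 ≤ 0 := by
      rcases le_or_gt (∑ i, a i^2) 0 with h | h
      · exact h
      · exfalso
        have hhalf : (1:ℝ) - δ*(k+1) ≥ 1/2 := by
          have : δ * ((k:ℝ)+1) ≤ 1/2 := by
            calc δ * ((k:ℝ)+1) = δ * (k+1) := by push_cast; ring
              _ ≤ 1/2 := hδb
          linarith
        nlinarith
    intro i
    have hterm : a i ^ 2 ≤ 0 := by
      have : ∀ j ∈ Finset.univ, 0 ≤ a j ^2 := fun j _ => sq_nonneg _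
      have := Finset.single_le_sum this (Finset.mem_univ i)
      linarith
    have := sq_nonneg (a i)
    have : a i ^ 2 = 0 := le_antisymm hterm (sq_nonneg _)
    exact pow_eq_zero_iff (by norm_num) |>.mp this
  -- apply Courant-Fischer
  have hCF : c ≤ νε ε k := by
    refine spec_CF (eε ε) (Rε ε) (νε ε) (hRεsa ε hε) honε heigε htotε
      (hνε_anti ε hε) (hνε_pos ε hε) k w hw_li c ?_
    intro x hx
    rw [Submodule.mem_span_range_iff_exists_fun] at hx
    obtain ⟨a, hax⟩ := hx
    obtain ⟨hlow, hup, hray⟩ := hx_est a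
    rw [← hax]
    obtain ⟨S, hSdef⟩ : ∃ S : ℝ, ∑ i, a i^2 = S := ⟨_, rfl⟩
    rw [hSdef] at hup hray
    have hSnn : 0 ≤ S := hSdef ▸ Finset.sum_nonneg fun i _ => sq_nonneg _
    have hkey : c * (1 + δ*(k+1)) + C₁ * δ ≤ ν k := by
      have hexp : c + (c * ((k:ℝ)+1) + C₁) * δ ≤ c + η/2 := by
        have : δ * (C₁ + c * ((k:ℝ)+1)) ≤ η/2 := by
          calc δ * (C₁ + c * ((k:ℝ)+1)) = δ * (C₁ + c * (k+1)) := by push_cast; ring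
            _ ≤ η/2 := hδa
        nlinarith
      have : c + η/2 = ν k := by rw [hcdef]; ring
      nlinarith
    calc c * ‖(∑ i, a i • w i : H₁)‖^2 ≤ c * ((1 + δ*(k+1)) * S) :=
          mul_le_mul_of_nonneg_left hup hc0.le
      _ ≤ ν k * S - C₁ * δ * S := by nlinarith
      _ ≤ ⟪Rε ε (∑ i, a i • w i), (∑ i, a i • w i : H₁)⟫ := hray
  linarith
end Dir1

section Dir2
variable {H₁ H₂ : Type*}
    [NormedAddCommGroup H₁] [InnerProductSpace ℝ H₁] [CompleteSpace H₁]
    [NormedAddCommGroup H₂] [InnerProductSpace ℝ H₂] [CompleteSpace H₂]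

set_option maxHeartbeats 3200000 in
lemma dir2 (Rε : ℝ → (H₁ →L[ℝ] H₁)) (R : H₂ →L[ℝ] H₂)
    (hRεsa : ∀ ε : ℝ, 0 < ε → IsSelfAdjoint (Rε ε)) (hRsa : IsSelfAdjoint R)
    (νε : ℝ → ℕ → ℝ) (ν : ℕ → ℝ) (eε : ℝ → ℕ → H₁) (e : ℕ → H₂)
    (hνε_pos : ∀ ε : ℝ, 0 < ε → ∀ k, 0 < νε ε k)
    (hνε_anti : ∀ ε : ℝ, 0 < ε → Antitone (νε ε))
    (heε : ∀ ε : ℝ, 0 < ε → Orthonormal ℝ (eε ε) ∧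
      (∀ k, Rε ε (eε ε k) = νε ε k • eε ε k) ∧
      (Submodule.span ℝ (Set.range (eε ε))).topologicalClosure = ⊤)
    (hν_pos : ∀ k, 0 < ν k) (hν_anti : Antitone ν)
    (he : Orthonormal ℝ e ∧ (∀ k, R (e k) = ν k • e k) ∧
      (Submodule.span ℝ (Set.range e)).topologicalClosure = ⊤)
    (Uε : ℝ → (H₂ →L[ℝ] H₁))
    (hU : ∀ g : H₂, Tendsto (fun ε : ℝ => ‖Uε ε g‖) (𝓝[>] 0) (𝓝 ‖g‖))
    (hnorm : Tendsto (fun ε : ℝ => ‖(Rε ε).comp (Uε ε) - (Uε ε).comp R‖) (𝓝[>] 0) (𝓝 0))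
    (h4 : ∀ εn : ℕ → ℝ, (∀ n, 0 < εn n) → Tendsto εn atTop (𝓝 0) →
      ∀ f : ℕ → H₁, (∃ M : ℝ, ∀ n, ‖f n‖ ≤ M) →
      ∃ φ : ℕ → ℕ, StrictMono φ ∧ ∃ g : H₂,
        Tendsto (fun n => ‖Rε (εn (φ n)) (f (φ n)) - Uε (εn (φ n)) g‖) atTop (𝓝 0))
    (k : ℕ) (η : ℝ) (hη : 0 < η) :
    ∀ᶠ ε in 𝓝[>] (0:ℝ), νε ε k < ν k + η := by
  classical
  by_contra hcon
  rw [Filter.not_eventually] at hcon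
  have hseq : ∀ n : ℕ, ∃ ε : ℝ, (0 < ε ∧ ε < 1/(n+1)) ∧ ν k + η ≤ νε ε k := by
    intro n
    have hIoo : Ioo (0:ℝ) (1/(n+1)) ∈ 𝓝[>] (0:ℝ) :=
      Ioo_mem_nhdsGT (by positivity)
    obtain ⟨ε, hε1, hε2⟩ := (hcon.and_eventually (eventually_of_mem hIoo fun x hx => hx)).exists
    exact ⟨ε, ⟨hε2.1, hε2.2⟩, not_lt.mp hε1⟩
  choose εn hεn hνk using hseq
  have hεnpos : ∀ n, 0 < εn n := fun n => (hεn n).1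
  have hεn0 : Tendsto εn atTop (𝓝 0) := by
    refine squeeze_zero (fun n => (hεnpos n).le) (fun n => (hεn n).2.le) ?_
    exact tendsto_one_div_add_atTop_nhds_zero_nat
  obtain ⟨φ, hφ, g, μl, hjs⟩ := subseq_claim Rε νε eε hνε_pos
    (fun ε hε => ⟨(heε ε hε).1.1, (heε ε hε).2.1⟩) Uε hU h4 (k+1) εn hεnpos hεn0
  set ε' : ℕ → ℝ := fun n => εn (φ n) with hε'def
  have hε'pos : ∀ n, 0 < ε' n := fun n => hεnpos _
  have hε'W : Tendsto ε' atTop (𝓝[>] 0) :=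
    tendsto_nhdsWithin_of_tendsto_nhds_of_eventually_within _
      (hεn0.comp hφ.tendsto_atTop) (Eventually.of_forall fun n => hε'pos n)
  have hgj : ∀ j : Fin (k+1),
      Tendsto (fun n => ‖Rε (ε' n) (eε (ε' n) (j:ℕ)) - Uε (ε' n) (g j)‖) atTop (𝓝 0) :=
    fun j => (hjs j).1
  have hμj : ∀ j : Fin (k+1), Tendsto (fun n => νε (ε' n) (j:ℕ)) atTop (𝓝 (μl j)) :=
    fun j => (hjs j).2
  have hμl_ge : ∀ j : Fin (k+1), ν k + η ≤ μl j := by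
    intro j
    refine ge_of_tendsto (hμj j) (Eventually.of_forall fun n => ?_)
    calc ν k + η ≤ νε (ε' n) k := hνk (φ n)
      _ ≤ νε (ε' n) (j:ℕ) := hνε_anti _ (hε'pos n) (Fin.is_le j)
  have hμl_pos : ∀ j, 0 < μl j := by
    intro j
    have := hν_pos k
    linarith [hμl_ge j]
  obtain ⟨hh, hhdef⟩ : ∃ hh : Fin (k+1) → H₂, ∀ j, hh j = (μl j)⁻¹ • g j :=
    ⟨_, fun _ => rfl⟩
  -- convergence of U hh to eigenvectors
  have hkey : ∀ j : Fin (k+1),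
      Tendsto (fun n => ‖Uε (ε' n) (hh j) - eε (ε' n) (j:ℕ)‖) atTop (𝓝 0) := by
    intro j
    have habsν : Tendsto (fun n => |νε (ε' n) (j:ℕ) - μl j|) atTop (𝓝 0) := by
      have := ((hμj j).sub (tendsto_const_nhds (x := μl j))).abs
      simpa using this
    have hb : Tendsto (fun n => (μl j)⁻¹ * (‖Rε (ε' n) (eε (ε' n) (j:ℕ)) - Uε (ε' n) (g j)‖
        + |νε (ε' n) (j:ℕ) - μl j|)) atTop (𝓝 ((μl j)⁻¹ * (0 + 0))) :=
      tendsto_const_nhds.mul ((hgj j).add habsν)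
    rw [show ((μl j)⁻¹ * (0+0) : ℝ) = 0 by ring] at hb
    refine squeeze_zero (fun n => norm_nonneg _) (fun n => ?_) hb
    have hid : Uε (ε' n) (hh j) - eε (ε' n) (j:ℕ)
        = (μl j)⁻¹ • (Uε (ε' n) (g j) - μl j • eε (ε' n) (j:ℕ)) := by
      rw [hhdef j, _root_.map_smul, smul_sub, inv_smul_smul₀ (hμl_pos j).ne']
    rw [hid, norm_smul, Real.norm_eq_abs, abs_of_pos (inv_pos.mpr (hμl_pos j))]
    refine mul_le_mul_of_nonneg_left ?_ (inv_nonneg.mpr (hμl_pos j).le)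
    calc ‖Uε (ε' n) (g j) - μl j • eε (ε' n) (j:ℕ)‖
        ≤ ‖Uε (ε' n) (g j) - νε (ε' n) (j:ℕ) • eε (ε' n) (j:ℕ)‖
          + ‖νε (ε' n) (j:ℕ) • eε (ε' n) (j:ℕ) - μl j • eε (ε' n) (j:ℕ)‖ := by
          have := norm_sub_le_norm_sub_add_norm_sub (Uε (ε' n) (g j))
            (νε (ε' n) (j:ℕ) • eε (ε' n) (j:ℕ)) (μl j • eε (ε' n) (j:ℕ))
          exact this
      _ ≤ ‖Rε (ε' n) (eε (ε' n) (j:ℕ)) - Uε (ε' n) (g j)‖ + |νε (ε' n) (j:ℕ) - μl j| := by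
          have h1 : ‖Uε (ε' n) (g j) - νε (ε' n) (j:ℕ) • eε (ε' n) (j:ℕ)‖
              = ‖Rε (ε' n) (eε (ε' n) (j:ℕ)) - Uε (ε' n) (g j)‖ := by
            rw [(heε _ (hε'pos n)).2.1 (j:ℕ), norm_sub_rev]
          have h2 : ‖νε (ε' n) (j:ℕ) • eε (ε' n) (j:ℕ) - μl j • eε (ε' n) (j:ℕ)‖
              = |νε (ε' n) (j:ℕ) - μl j| := by
            rw [← sub_smul, norm_smul, Real.norm_eq_abs, (heε _ (hε'pos n)).1.1 (j:ℕ), mul_one]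
          rw [h1, h2]
  have hUhnorm : ∀ j : Fin (k+1),
      Tendsto (fun n => ‖Uε (ε' n) (hh j)‖) atTop (𝓝 ‖hh j‖) :=
    fun j => (hU (hh j)).comp hε'W
  -- orthonormality of hh
  have hinner : ∀ i j : Fin (k+1), ⟪hh i, hh j⟫ = if i = j then 1 else 0 := by
    intro i j
    have t1 : Tendsto (fun n => ⟪Uε (ε' n) (hh i), Uε (ε' n) (hh j)⟫) atTop
        (𝓝 ⟪hh i, hh j⟫) := (hUinner_aux Uε hU (hh i) (hh j)).comp hε'W
    have hconst : ∀ n, ⟪eε (ε' n) (i:ℕ), eε (ε' n) (j:ℕ)⟫ = if i = j then (1:ℝ) else 0 := by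
      intro n
      rw [orthonormal_iff_ite.mp (heε _ (hε'pos n)).1 (i:ℕ) (j:ℕ)]
      rcases eq_or_ne i j with h | h
      · subst h; simp
      · rw [if_neg (fun hv => h (Fin.val_injective hv)), if_neg h]
    have hA : Tendsto (fun n => ⟪Uε (ε' n) (hh i) - eε (ε' n) (i:ℕ), Uε (ε' n) (hh j)⟫)
        atTop (𝓝 0) := by
      have hbd : Tendsto (fun n => ‖Uε (ε' n) (hh i) - eε (ε' n) (i:ℕ)‖ * ‖Uε (ε' n) (hh j)‖)
          atTop (𝓝 (0 * ‖hh j‖)) := (hkey i).mul (hUhnorm j)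
      rw [zero_mul] at hbd
      exact squeeze_zero_norm (fun n => abs_real_inner_le_norm _ _) hbd
    have hB : Tendsto (fun n => ⟪eε (ε' n) (i:ℕ), Uε (ε' n) (hh j) - eε (ε' n) (j:ℕ)⟫)
        atTop (𝓝 0) := by
      refine squeeze_zero_norm (fun n => ?_) (hkey j)
      calc |⟪eε (ε' n) (i:ℕ), Uε (ε' n) (hh j) - eε (ε' n) (j:ℕ)⟫|
          ≤ ‖eε (ε' n) (i:ℕ)‖ * ‖Uε (ε' n) (hh j) - eε (ε' n) (j:ℕ)‖ :=
            abs_real_inner_le_norm _ _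
        _ = ‖Uε (ε' n) (hh j) - eε (ε' n) (j:ℕ)‖ := by
            rw [(heε _ (hε'pos n)).1.1 (i:ℕ), one_mul]
    have t2 : Tendsto (fun n => ⟪Uε (ε' n) (hh i), Uε (ε' n) (hh j)⟫) atTop
        (𝓝 (if i = j then 1 else 0)) := by
      have hsum := (hA.add hB).add (tendsto_const_nhds
        (x := if i = j then (1:ℝ) else 0) (f := atTop (α := ℕ)))
      rw [zero_add, zero_add] at hsum
      refine hsum.congr fun n => ?_
      rw [← hconst n, inner_sub_left, inner_sub_right]
      ring
    exact tendsto_nhds_unique t1 t2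
  have hνnorm : Tendsto (fun n => ‖(Rε (ε' n)).comp (Uε (ε' n)) - (Uε (ε' n)).comp R‖)
      atTop (𝓝 0) := hnorm.comp hε'W
  -- eigenvector property
  have heigen : ∀ j : Fin (k+1), R (hh j) = μl j • hh j := by
    intro j
    have hA : Tendsto (fun n => ‖Uε (ε' n) (R (hh j) - μl j • hh j)‖) atTop
        (𝓝 ‖R (hh j) - μl j • hh j‖) := (hU _).comp hε'W
    have hB : Tendsto (fun n => ‖Uε (ε' n) (R (hh j) - μl j • hh j)‖) atTop (𝓝 0) := by
      have habsν : Tendsto (fun n => |νε (ε' n) (j:ℕ) - μl j|) atTop (𝓝 0) := by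
        have := ((hμj j).sub (tendsto_const_nhds (x := μl j))).abs
        simpa using this
      have hkey' : Tendsto (fun n => ‖eε (ε' n) (j:ℕ) - Uε (ε' n) (hh j)‖) atTop (𝓝 0) :=
        (hkey j).congr fun n => (norm_sub_rev _ _)
      have hν0 : Tendsto (fun n => νε (ε' n) 0) atTop (𝓝 (μl ⟨0, Nat.succ_pos k⟩)) := by
        have := hμj ⟨0, Nat.succ_pos k⟩
        simpa using this
      have hlim : Tendsto (fun n =>
          ‖(Rε (ε' n)).comp (Uε (ε' n)) - (Uε (ε' n)).comp R‖ * ‖hh j‖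
          + νε (ε' n) 0 * ‖Uε (ε' n) (hh j) - eε (ε' n) (j:ℕ)‖
          + |νε (ε' n) (j:ℕ) - μl j|
          + μl j * ‖eε (ε' n) (j:ℕ) - Uε (ε' n) (hh j)‖) atTop
          (𝓝 (0 * ‖hh j‖ + μl ⟨0, Nat.succ_pos k⟩ * 0 + 0 + μl j * 0)) :=
        (((hνnorm.mul tendsto_const_nhds).add (hν0.mul (hkey j))).add habsν).add
          (tendsto_const_nhds.mul hkey')
      rw [show (0 * ‖hh j‖ + μl ⟨0, Nat.succ_pos k⟩ * 0 + 0 + μl j * 0 : ℝ) = 0 by ring] at hlim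
      refine squeeze_zero (fun n => norm_nonneg _) (fun n => ?_) hlim
      have e1 : Uε (ε' n) (R (hh j) - μl j • hh j)
          = -(((Rε (ε' n)).comp (Uε (ε' n)) - (Uε (ε' n)).comp R) (hh j))
            + Rε (ε' n) (Uε (ε' n) (hh j) - eε (ε' n) (j:ℕ))
            + (νε (ε' n) (j:ℕ) - μl j) • eε (ε' n) (j:ℕ)
            + μl j • (eε (ε' n) (j:ℕ) - Uε (ε' n) (hh j)) := by
        rw [map_sub, _root_.map_smul, ContinuousLinearMap.sub_apply, ContinuousLinearMap.comp_apply,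
          ContinuousLinearMap.comp_apply, map_sub, (heε _ (hε'pos n)).2.1 (j:ℕ), sub_smul,
          smul_sub]
        abel
      rw [e1]
      have n1 : ‖-(((Rε (ε' n)).comp (Uε (ε' n)) - (Uε (ε' n)).comp R) (hh j))‖
          ≤ ‖(Rε (ε' n)).comp (Uε (ε' n)) - (Uε (ε' n)).comp R‖ * ‖hh j‖ := by
        rw [norm_neg]
        exact ContinuousLinearMap.le_opNorm _ _
      have n2 : ‖Rε (ε' n) (Uε (ε' n) (hh j) - eε (ε' n) (j:ℕ))‖
          ≤ νε (ε' n) 0 * ‖Uε (ε' n) (hh j) - eε (ε' n) (j:ℕ)‖ := by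
        obtain ⟨hon, heig, htot⟩ := heε _ (hε'pos n)
        exact spec_norm_le (eε (ε' n)) (Rε (ε' n)) (νε (ε' n)) (hRεsa _ (hε'pos n))
          hon heig htot (hνε_anti _ (hε'pos n)) (hνε_pos _ (hε'pos n)) _
      have n3 : ‖(νε (ε' n) (j:ℕ) - μl j) • eε (ε' n) (j:ℕ)‖ = |νε (ε' n) (j:ℕ) - μl j| := by
        rw [norm_smul, Real.norm_eq_abs, (heε _ (hε'pos n)).1.1 (j:ℕ), mul_one]
      have n4 : ‖μl j • (eε (ε' n) (j:ℕ) - Uε (ε' n) (hh j))‖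
          = μl j * ‖eε (ε' n) (j:ℕ) - Uε (ε' n) (hh j)‖ := by
        rw [norm_smul, Real.norm_eq_abs, abs_of_pos (hμl_pos j)]
      calc ‖_ + _ + _ + _‖ ≤ ‖_ + _ + _‖ + ‖_‖ := norm_add_le _ _
        _ ≤ (‖_ + _‖ + ‖_‖) + ‖_‖ := by gcongr; exact norm_add_le _ _
        _ ≤ ((‖_‖ + ‖_‖) + ‖_‖) + ‖_‖ := by gcongr <;> exact norm_add_le _ _
        _ ≤ _ := by
            rw [n3, n4]
            gcongr
    have hzero : ‖R (hh j) - μl j • hh j‖ = 0 := tendsto_nhds_unique hA hB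
    exact sub_eq_zero.mp (norm_eq_zero.mp hzero)
  -- contradiction via finite dimension
  have honh : Orthonormal ℝ hh := orthonormal_iff_ite.mpr hinner
  have hperp : ∀ (j : Fin (k+1)) (i : ℕ), k ≤ i → ⟪e i, hh j⟫ = 0 := by
    intro j i hik
    have h1 : ⟪e i, R (hh j)⟫ = ν i * ⟪e i, hh j⟫ := spec_coeff e R ν hRsa he.2.1 i (hh j)
    rw [heigen j, real_inner_smul_right] at h1
    have hne : ν i < μl j := by
      have h2 := hν_anti hik
      have := hμl_ge j
      linarith
    have hfac : (μl j - ν i) * ⟪e i, hh j⟫ = 0 := by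
      have : (μl j - ν i) * ⟪e i, hh j⟫ = μl j * ⟪e i, hh j⟫ - ν i * ⟪e i, hh j⟫ := by ring
      rw [this, h1, sub_self]
    exact (mul_eq_zero.mp hfac).resolve_left (sub_ne_zero.mpr hne.ne')
  set W := Submodule.span ℝ (Set.range (fun i : Fin k => e (i:ℕ))) with hWdef
  have hWfd : FiniteDimensional ℝ W := FiniteDimensional.span_of_finite ℝ (finite_range _)
  have hWperp : ∀ i : ℕ, k ≤ i → ∀ u ∈ W, ⟪e i, u⟫ = 0 := by
    intro i hik u hu
    have hWker : W ≤ LinearMap.ker (innerSL ℝ (e i) : H₂ →ₗ[ℝ] ℝ) := by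
      rw [hWdef, Submodule.span_le]
      rintro _ ⟨m, rfl⟩
      simp only [SetLike.mem_coe, LinearMap.mem_ker, ContinuousLinearMap.coe_coe, innerSL_apply_apply]
      rw [orthonormal_iff_ite.mp he.1 i (m:ℕ), if_neg]
      have := m.2
      omega
    exact hWker hu
  have hmem : ∀ j, hh j ∈ W := by
    intro j
    have hd : hh j - (W.orthogonalProjectionOnto (hh j) : H₂) = 0 := by
      apply tot_eq_zero e he.1 he.2.2
      intro i
      rcases lt_or_ge i k with hik | hik
      · have hdW : hh j - (W.orthogonalProjectionOnto (hh j) : H₂) ∈ Wᗮ :=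
          Submodule.sub_starProjection_mem_orthogonal _
        have heiW : e i ∈ W := Submodule.subset_span ⟨⟨i, hik⟩, rfl⟩
        rw [real_inner_comm]
        exact (Submodule.mem_orthogonal W _).mp hdW (e i) heiW
      · rw [inner_sub_left]
        have h1 : ⟪hh j, e i⟫ = 0 := by rw [real_inner_comm]; exact hperp j i hik
        have h2 : ⟪(W.orthogonalProjectionOnto (hh j) : H₂), e i⟫ = 0 := by
          rw [real_inner_comm]
          exact hWperp i hik _ (SetLike.coe_mem _)
        rw [h1, h2, sub_zero]
    have := sub_eq_zero.mp hd
    rw [this]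
    exact SetLike.coe_mem _
  have hli : LinearIndependent ℝ hh := honh.linearIndependent
  have hspan : Submodule.span ℝ (Set.range hh) ≤ W :=
    Submodule.span_le.mpr (by rintro _ ⟨j, rfl⟩; exact hmem j)
  have h1 : Module.finrank ℝ (Submodule.span ℝ (Set.range hh)) = k+1 := by
    rw [finrank_span_eq_card hli]
    simp
  have h2 : Module.finrank ℝ W ≤ k := by
    have := finrank_span_le_card (R := ℝ) (Set.range (fun i : Fin k => e (i:ℕ)))
    calc Module.finrank ℝ W ≤ (Set.range (fun i : Fin k => e (i:ℕ))).toFinset.card := this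
      _ ≤ k := by
        rw [Set.toFinset_range]
        exact (Finset.card_image_le).trans (by simp)
  have h3 := Submodule.finrank_mono hspan
  omega
end Dir2
/-- Spectral convergence: if the compact, self-adjoint, nonnegative operators `Rε` (with
eigenvalue enumerations `νε ε` realized by orthonormal eigenbases `eε ε`) converge to `R`
(eigenvalues `ν`, eigenbasis `e`) in the sense `‖Rε Uε − Uε R‖ → 0` with asymptotically isometric
identification operators `Uε`, and the discrete compactness hypothesis (H4) holds, then every
eigenvalue converges: `νε ε k → ν k` as `ε → 0⁺`. -/
theorem stmt19 {H₁ H₂ : Type*}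
    [NormedAddCommGroup H₁] [InnerProductSpace ℝ H₁] [CompleteSpace H₁]
    [NormedAddCommGroup H₂] [InnerProductSpace ℝ H₂] [CompleteSpace H₂]
    (Rε : ℝ → (H₁ →L[ℝ] H₁)) (R : H₂ →L[ℝ] H₂)
    (hRεc : ∀ ε : ℝ, 0 < ε → IsCompactOperator (Rε ε))
    (hRεsa : ∀ ε : ℝ, 0 < ε → IsSelfAdjoint (Rε ε))
    (hRεpos : ∀ ε : ℝ, 0 < ε → ∀ x : H₁, 0 ≤ ⟪Rε ε x, x⟫)
    (hRc : IsCompactOperator R) (hRsa : IsSelfAdjoint R) (hRpos : ∀ x : H₂, 0 ≤ ⟪R x, x⟫)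
    (νε : ℝ → ℕ → ℝ) (ν : ℕ → ℝ) (eε : ℝ → ℕ → H₁) (e : ℕ → H₂)
    (hνε_pos : ∀ ε : ℝ, 0 < ε → ∀ k, 0 < νε ε k)
    (hνε_anti : ∀ ε : ℝ, 0 < ε → Antitone (νε ε))
    (heε : ∀ ε : ℝ, 0 < ε → Orthonormal ℝ (eε ε) ∧
      (∀ k, Rε ε (eε ε k) = νε ε k • eε ε k) ∧
      (Submodule.span ℝ (Set.range (eε ε))).topologicalClosure = ⊤)
    (hν_pos : ∀ k, 0 < ν k) (hν_anti : Antitone ν)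
    (he : Orthonormal ℝ e ∧ (∀ k, R (e k) = ν k • e k) ∧
      (Submodule.span ℝ (Set.range e)).topologicalClosure = ⊤)
    (Uε : ℝ → (H₂ →L[ℝ] H₁))
    (hU : ∀ g : H₂, Tendsto (fun ε : ℝ => ‖Uε ε g‖) (𝓝[>] 0) (𝓝 ‖g‖))
    (hnorm : Tendsto (fun ε : ℝ => ‖(Rε ε).comp (Uε ε) - (Uε ε).comp R‖) (𝓝[>] 0) (𝓝 0))
    (h4 : ∀ εn : ℕ → ℝ, (∀ n, 0 < εn n) → Tendsto εn atTop (𝓝 0) →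
      ∀ f : ℕ → H₁, (∃ M : ℝ, ∀ n, ‖f n‖ ≤ M) →
      ∃ φ : ℕ → ℕ, StrictMono φ ∧ ∃ g : H₂,
        Tendsto (fun n => ‖Rε (εn (φ n)) (f (φ n)) - Uε (εn (φ n)) g‖) atTop (𝓝 0)) :
    ∀ k : ℕ, Tendsto (fun ε : ℝ => νε ε k) (𝓝[>] 0) (𝓝 (ν k)) := by
  intro k
  rw [Metric.tendsto_nhds]
  intro η hη
  have h1 := dir1 Rε R hRεsa νε ν eε e hνε_pos hνε_anti heε hν_pos hν_anti he Uε hU hnorm k η hη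
  have h2 := dir2 Rε R hRεsa hRsa νε ν eε e hνε_pos hνε_anti heε hν_pos hν_anti he Uε hU hnorm h4 k η hη
  filter_upwards [h1, h2] with ε ha hb
  rw [Real.dist_eq, abs_sub_lt_iff]
  constructor <;> linarith
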